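/- Fix t ∈ ℝ and α ∈ [0, π/2). The function h(τ) = cosh(α·t)·2·√τ·K_{it}(2πτ) is twice differentiable on (0, ∞) and satisfies the differential equation h''(τ) + ( −4π² + (1/4 + t²)/τ² )·h(τ) = 0 for every τ > 0. -/

import Mathlib

open MeasureTheory Real Set

noncomputable section

/-- The modified Bessel function of imaginary order:
    K_{it}(x) = ∫₀^∞ e^{−x cosh u} cos(tu) du. -/
def Kit (t x : ℝ) : ℝ :=
  ∫ u in Set.Ioi (0 : ℝ), Real.exp (-x * Real.cosh u) * Real.cos (t * u)




/-- cosh u dominates u. -/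
lemma le_cosh_self (u : ℝ) : u ≤ Real.cosh u := by
  rcases le_or_gt u 0 with h | h
  · exact h.trans (by positivity)
  · exact le_of_lt ((Real.self_lt_sinh_iff.mpr h).trans (Real.sinh_lt_cosh u))

lemma abs_sinh_le_cosh (u : ℝ) : |Real.sinh u| ≤ Real.cosh u := by
  have h1 := Real.cosh_add_sinh (x := u)
  have h2 := Real.cosh_sub_sinh (x := u)
  have e1 := Real.exp_pos u
  have e2 := Real.exp_pos (-u)
  rw [abs_le]; constructor <;> linarith

lemma coshpow_exp_integrable {x : ℝ} (hx : 0 < x) (k : ℕ) :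
    IntegrableOn (fun u => Real.cosh u ^ k * Real.exp (-x * Real.cosh u)) (Ioi (0:ℝ)) := by
  set a : ℝ := 2 * (k + 1) / x with ha
  have ha0 : 0 < a := by positivity
  have key : ∀ u : ℝ, 0 ≤ u → Real.cosh u ^ k * Real.exp (-x * Real.cosh u)
      ≤ a ^ k * Real.exp (-(x/2) * u) := by
    intro u hu
    have hc1 : (1:ℝ) ≤ Real.cosh u := Real.one_le_cosh u
    have hcu : u ≤ Real.cosh u := le_cosh_self u
    have h1 : Real.cosh u ≤ a * Real.exp (Real.cosh u / a) := by
      have h := Real.add_one_le_exp (Real.cosh u / a)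
      have : Real.cosh u / a ≤ Real.exp (Real.cosh u / a) := by linarith
      calc Real.cosh u = a * (Real.cosh u / a) := by field_simp
        _ ≤ a * Real.exp (Real.cosh u / a) := by
            exact mul_le_mul_of_nonneg_left this ha0.le
    have h2 : Real.cosh u ^ k ≤ a ^ k * Real.exp ((k : ℝ) * (Real.cosh u / a)) := by
      calc Real.cosh u ^ k ≤ (a * Real.exp (Real.cosh u / a)) ^ k :=
            pow_le_pow_left₀ (by positivity) h1 k
        _ = a ^ k * Real.exp ((k : ℝ) * (Real.cosh u / a)) := by
            rw [mul_pow, ← Real.exp_nat_mul]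
    have h3 : (k : ℝ) * (Real.cosh u / a) ≤ x/2 * Real.cosh u := by
      rw [ha]
      have hk0 : (0:ℝ) ≤ k := Nat.cast_nonneg k
      rw [div_div_eq_mul_div, mul_div_assoc', div_le_iff₀ (by positivity)]
      nlinarith [Real.cosh_pos (x := u), hx.le]
    calc Real.cosh u ^ k * Real.exp (-x * Real.cosh u)
        ≤ (a ^ k * Real.exp ((k : ℝ) * (Real.cosh u / a))) * Real.exp (-x * Real.cosh u) := by
          exact mul_le_mul_of_nonneg_right h2 (Real.exp_pos _).le
      _ = a ^ k * Real.exp ((k : ℝ) * (Real.cosh u / a) + -x * Real.cosh u) := by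
          rw [Real.exp_add]; ring
      _ ≤ a ^ k * Real.exp (-(x/2) * Real.cosh u) := by
          apply mul_le_mul_of_nonneg_left _ (by positivity)
          apply Real.exp_le_exp.mpr
          linarith
      _ ≤ a ^ k * Real.exp (-(x/2) * u) := by
          apply mul_le_mul_of_nonneg_left _ (by positivity)
          apply Real.exp_le_exp.mpr
          nlinarith
  have hint : IntegrableOn (fun u => a ^ k * Real.exp (-(x/2) * u)) (Ioi (0:ℝ)) := by
    have := (exp_neg_integrableOn_Ioi 0 (half_pos hx)).const_mul (a ^ k)
    simpa [neg_mul, mul_comm, IntegrableOn] using this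
  apply hint.mono'
  · exact (Continuous.aestronglyMeasurable (by fun_prop)).restrict
  · filter_upwards [ae_restrict_mem measurableSet_Ioi] with u hu
    have h0 : (0:ℝ) ≤ Real.cosh u ^ k * Real.exp (-x * Real.cosh u) := by positivity
    rw [Real.norm_eq_abs, abs_of_nonneg h0]
    exact key u (le_of_lt hu)


def Kit1 (t x : ℝ) : ℝ :=
  ∫ u in Set.Ioi (0 : ℝ), -(Real.cosh u * Real.exp (-x * Real.cosh u) * Real.cos (t * u))

def Kit2 (t x : ℝ) : ℝ :=
  ∫ u in Set.Ioi (0 : ℝ), Real.cosh u ^ 2 * Real.exp (-x * Real.cosh u) * Real.cos (t * u)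

lemma integrableF (t : ℝ) {x : ℝ} (hx : 0 < x) (k : ℕ) :
    IntegrableOn (fun u => Real.cosh u ^ k * Real.exp (-x * Real.cosh u) * Real.cos (t * u))
      (Ioi (0:ℝ)) := by
  apply (coshpow_exp_integrable hx k).mono'
  · exact (Continuous.aestronglyMeasurable (by fun_prop)).restrict
  · filter_upwards with u
    rw [Real.norm_eq_abs, abs_mul]
    have h1 : |Real.cosh u ^ k * Real.exp (-x * Real.cosh u)|
        = Real.cosh u ^ k * Real.exp (-x * Real.cosh u) := abs_of_nonneg (by positivity)
    rw [h1]
    nlinarith [abs_cos_le_one (t*u), abs_nonneg (Real.cos (t*u)),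
      mul_pos (pow_pos (Real.cosh_pos u) k) (Real.exp_pos (-x * Real.cosh u))]

lemma hasDerivAt_integrand (t u y : ℝ) :
    HasDerivAt (fun y => Real.exp (-y * Real.cosh u) * Real.cos (t * u))
      (-(Real.cosh u * Real.exp (-y * Real.cosh u) * Real.cos (t * u))) y := by
  have h1 : HasDerivAt (fun y : ℝ => -y * Real.cosh u) (-Real.cosh u) y := by
    simpa using (hasDerivAt_id y).neg.mul_const (Real.cosh u)
  have := h1.exp.mul_const (Real.cos (t * u))
  convert this using 1
  · rfl
  · rfl
  · ring

lemma hasDerivAt_integrand2 (t u y : ℝ) :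
    HasDerivAt (fun y => -(Real.cosh u * Real.exp (-y * Real.cosh u) * Real.cos (t * u)))
      (Real.cosh u ^ 2 * Real.exp (-y * Real.cosh u) * Real.cos (t * u)) y := by
  have h1 : HasDerivAt (fun y : ℝ => -y * Real.cosh u) (-Real.cosh u) y := by
    simpa using (hasDerivAt_id y).neg.mul_const (Real.cosh u)
  have := (((h1.exp).mul_const (Real.cos (t * u))).const_mul (Real.cosh u)).neg
  convert this using 1
  · rfl
  · rfl
  · funext y; simp only [Pi.neg_apply]; ring
  · ring

lemma ball_bound {x : ℝ} (hx : 0 < x) (k : ℕ) (t : ℝ) :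
    ∀ u : ℝ, ∀ y ∈ Metric.ball x (x/2),
      ‖Real.cosh u ^ k * Real.exp (-y * Real.cosh u) * Real.cos (t * u)‖
        ≤ Real.cosh u ^ k * Real.exp (-(x/2) * Real.cosh u) := by
  intro u y hy
  rw [Metric.mem_ball, Real.dist_eq, abs_lt] at hy
  have hy2 : x/2 ≤ y := by linarith [hy.1]
  have hc : (0:ℝ) < Real.cosh u := Real.cosh_pos u
  have hexp : Real.exp (-y * Real.cosh u) ≤ Real.exp (-(x/2) * Real.cosh u) := by
    apply Real.exp_le_exp.mpr; nlinarith
  rw [Real.norm_eq_abs, abs_mul, abs_mul, abs_of_nonneg (by positivity : (0:ℝ) ≤ Real.cosh u ^ k),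
    abs_of_nonneg (Real.exp_pos _).le]
  nlinarith [abs_cos_le_one (t*u), abs_nonneg (Real.cos (t*u)), pow_pos hc k,
    Real.exp_pos (-y * Real.cosh u), mul_pos (pow_pos hc k) (Real.exp_pos (-y * Real.cosh u))]

lemma hasDerivAt_Kit (t : ℝ) {x : ℝ} (hx : 0 < x) :
    HasDerivAt (Kit t) (Kit1 t x) x := by
  have H := hasDerivAt_integral_of_dominated_loc_of_deriv_le
    (μ := volume.restrict (Ioi (0:ℝ))) (x₀ := x) (s := Metric.ball x (x/2))
    (F := fun y u => Real.exp (-y * Real.cosh u) * Real.cos (t * u))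
    (F' := fun y u => -(Real.cosh u * Real.exp (-y * Real.cosh u) * Real.cos (t * u)))
    (bound := fun u => Real.cosh u * Real.exp (-(x/2) * Real.cosh u))
    (Metric.ball_mem_nhds x (half_pos hx))
    (Filter.Eventually.of_forall fun y =>
      (Continuous.aestronglyMeasurable (by fun_prop)).restrict)
    (by simpa [IntegrableOn] using integrableF t hx 0)
    (Continuous.aestronglyMeasurable (by fun_prop)).restrict
    (Filter.Eventually.of_forall fun u => by
      intro y hy
      have := ball_bound hx 1 t u y hy
      simpa [norm_neg] using this)
    (by simpa [IntegrableOn] using coshpow_exp_integrable (half_pos hx) 1)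
    (Filter.Eventually.of_forall fun u => fun y _ => hasDerivAt_integrand t u y)
  exact H.2

lemma hasDerivAt_Kit1 (t : ℝ) {x : ℝ} (hx : 0 < x) :
    HasDerivAt (Kit1 t) (Kit2 t x) x := by
  have H := hasDerivAt_integral_of_dominated_loc_of_deriv_le
    (μ := volume.restrict (Ioi (0:ℝ))) (x₀ := x) (s := Metric.ball x (x/2))
    (F := fun y u => -(Real.cosh u * Real.exp (-y * Real.cosh u) * Real.cos (t * u)))
    (F' := fun y u => Real.cosh u ^ 2 * Real.exp (-y * Real.cosh u) * Real.cos (t * u))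
    (bound := fun u => Real.cosh u ^ 2 * Real.exp (-(x/2) * Real.cosh u))
    (Metric.ball_mem_nhds x (half_pos hx))
    (Filter.Eventually.of_forall fun y =>
      (Continuous.aestronglyMeasurable (by fun_prop)).restrict)
    (by have := (integrableF t hx 1).neg; simp only [pow_one, neg_mul] at this ⊢; exact this)
    (Continuous.aestronglyMeasurable (by fun_prop)).restrict
    (Filter.Eventually.of_forall fun u => fun y hy => ball_bound hx 2 t u y hy)
    (coshpow_exp_integrable (half_pos hx) 2)
    (Filter.Eventually.of_forall fun u => fun y _ => hasDerivAt_integrand2 t u y)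
  exact H.2

lemma Kit_def (t x : ℝ) : Kit t x =
    ∫ u in Set.Ioi (0 : ℝ), Real.exp (-x * Real.cosh u) * Real.cos (t * u) := rfl

lemma Kit1_def (t x : ℝ) : Kit1 t x =
    ∫ u in Set.Ioi (0 : ℝ), -(Real.cosh u * Real.exp (-x * Real.cosh u) * Real.cos (t * u)) := rfl

lemma Kit2_def (t x : ℝ) : Kit2 t x =
    ∫ u in Set.Ioi (0 : ℝ), Real.cosh u ^ 2 * Real.exp (-x * Real.cosh u) * Real.cos (t * u) := rfl

lemma bessel_ode (t : ℝ) {x : ℝ} (hx : 0 < x) :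
    x ^ 2 * Kit2 t x + x * Kit1 t x - (x ^ 2 - t ^ 2) * Kit t x = 0 := by
  set g : ℝ → ℝ := fun u =>
    Real.exp (-x * Real.cosh u) * (x * Real.sinh u * Real.cos (t * u) - t * Real.sin (t * u))
    with hgdef
  set G : ℝ → ℝ := fun u =>
    Real.exp (-x * Real.cosh u) *
      ((x * Real.cosh u - x ^ 2 * Real.sinh u ^ 2 - t ^ 2) * Real.cos (t * u)) with hGdef
  have hg : ∀ u : ℝ, HasDerivAt g (G u) u := by
    intro u
    have he : HasDerivAt (fun u => Real.exp (-x * Real.cosh u))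
        (Real.exp (-x * Real.cosh u) * (-x * Real.sinh u)) u := by
      exact ((Real.hasDerivAt_cosh u).const_mul (-x)).exp
    have hcos : HasDerivAt (fun u => Real.cos (t * u)) (-Real.sin (t * u) * t) u := by
      simpa using (((hasDerivAt_id u).const_mul t).cos)
    have hsin : HasDerivAt (fun u => Real.sin (t * u)) (Real.cos (t * u) * t) u := by
      simpa using (((hasDerivAt_id u).const_mul t).sin)
    have hp : HasDerivAt
        (fun u => x * Real.sinh u * Real.cos (t * u) - t * Real.sin (t * u))
        ((x * Real.cosh u) * Real.cos (t * u) + (x * Real.sinh u) * (-Real.sin (t * u) * t)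
          - t * (Real.cos (t * u) * t)) u :=
      (((Real.hasDerivAt_sinh u).const_mul x).mul hcos).sub (hsin.const_mul t)
    have := he.mul hp
    convert this using 1
    · rfl
    · rfl
    · rfl
    simp only [hGdef]
    ring
  have hG_int : IntegrableOn G (Ioi (0:ℝ)) := by
    have hb : IntegrableOn (fun u =>
        x * (Real.cosh u * Real.exp (-x * Real.cosh u))
        + x ^ 2 * (Real.cosh u ^ 2 * Real.exp (-x * Real.cosh u))
        + t ^ 2 * (Real.exp (-x * Real.cosh u))) (Ioi (0:ℝ)) := by
      have h1 := (coshpow_exp_integrable hx 1).const_mul x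
      have h2 := (coshpow_exp_integrable hx 2).const_mul (x ^ 2)
      have h0 := (coshpow_exp_integrable hx 0).const_mul (t ^ 2)
      simp only [pow_one, pow_zero, one_mul] at h1 h2 h0
      exact (h1.add h2).add h0
    apply hb.mono'
    · exact (Continuous.aestronglyMeasurable (by fun_prop)).restrict
    · filter_upwards with u
      have hc := Real.cosh_pos u
      have he := Real.exp_pos (-x * Real.cosh u)
      have hs := abs_sinh_le_cosh u
      have hcos := abs_cos_le_one (t * u)
      rw [Real.norm_eq_abs, hGdef]
      simp only
      rw [abs_mul, abs_of_nonneg he.le, abs_mul]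
      have h1 : |x * Real.cosh u - x ^ 2 * Real.sinh u ^ 2 - t ^ 2|
          ≤ x * Real.cosh u + x ^ 2 * Real.cosh u ^ 2 + t ^ 2 := by
        have : Real.sinh u ^ 2 ≤ Real.cosh u ^ 2 := by
          nlinarith [abs_nonneg (Real.sinh u), sq_abs (Real.sinh u)]
        rw [abs_le]
        constructor <;> nlinarith [sq_nonneg (Real.sinh u), sq_nonneg x, sq_nonneg t]
      nlinarith [abs_nonneg (Real.cos (t*u)), abs_nonneg (x * Real.cosh u - x ^ 2 * Real.sinh u ^ 2 - t ^ 2),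
        mul_le_mul h1 hcos (abs_nonneg _) (by positivity : (0:ℝ) ≤ x * Real.cosh u + x ^ 2 * Real.cosh u ^ 2 + t ^ 2)]
  have hg0 : g 0 = 0 := by simp [hgdef]
  have hgtop : Filter.Tendsto g Filter.atTop (nhds 0) := by
    apply squeeze_zero_norm (a := fun u => (x * Real.cosh u + |t|) * Real.exp (-x * Real.cosh u))
    · intro u
      have hc := Real.cosh_pos u
      have he := Real.exp_pos (-x * Real.cosh u)
      have hs := abs_sinh_le_cosh u
      rw [Real.norm_eq_abs, hgdef]
      simp only
      rw [abs_mul, abs_of_nonneg he.le]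
      have h1 : |x * Real.sinh u * Real.cos (t * u) - t * Real.sin (t * u)|
          ≤ x * Real.cosh u + |t| := by
        have h2 := abs_cos_le_one (t * u)
        have h3 := abs_sin_le_one (t * u)
        calc |x * Real.sinh u * Real.cos (t * u) - t * Real.sin (t * u)|
            ≤ |x * Real.sinh u * Real.cos (t * u)| + |t * Real.sin (t * u)| := abs_sub _ _
          _ ≤ x * Real.cosh u + |t| := by
              rw [abs_mul, abs_mul, abs_mul, abs_of_nonneg hx.le]
              have : |Real.sinh u| * |Real.cos (t*u)| ≤ Real.cosh u * 1 :=
                mul_le_mul hs h2 (abs_nonneg _) hc.le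
              have h4 : |t| * |Real.sin (t*u)| ≤ |t| * 1 :=
                mul_le_mul_of_nonneg_left h3 (abs_nonneg t)
              nlinarith [abs_nonneg (Real.sinh u)]
      nlinarith
    · have hφ : Filter.Tendsto (fun s : ℝ => (x * s + |t|) * Real.exp (-x * s))
          Filter.atTop (nhds 0) := by
        have hx1 : Filter.Tendsto (fun s : ℝ => x * s) Filter.atTop Filter.atTop :=
          Filter.tendsto_id.const_mul_atTop hx
        have hA : Filter.Tendsto (fun s : ℝ => (x * s) * Real.exp (-(x * s)))
            Filter.atTop (nhds 0) := by
          have := (Real.tendsto_pow_mul_exp_neg_atTop_nhds_zero 1).comp hx1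
          simpa [Function.comp_def] using this
        have hB : Filter.Tendsto (fun s : ℝ => |t| * Real.exp (-(x * s)))
            Filter.atTop (nhds 0) := by
          have h5 : Filter.Tendsto (fun s : ℝ => Real.exp (-(x * s))) Filter.atTop (nhds 0) :=
            Real.tendsto_exp_atBot.comp (Filter.tendsto_neg_atTop_atBot.comp hx1)
          simpa using h5.const_mul |t|
        have := hA.add hB
        simpa [add_mul, neg_mul, mul_comm] using this
      have hctop : Filter.Tendsto Real.cosh Filter.atTop Filter.atTop := by
        apply Filter.tendsto_atTop_mono (fun u => ?_) Filter.tendsto_id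
        exact (le_cosh_self u)
      have := hφ.comp hctop
      simpa [Function.comp_def] using this
  have hIG : ∫ u in Ioi (0:ℝ), G u = 0 - g 0 :=
    integral_Ioi_of_hasDerivAt_of_tendsto' (fun u _ => hg u) hG_int hgtop
  rw [hg0, sub_zero] at hIG
  have h2i := (integrableF t hx 2).const_mul (x ^ 2)
  have h1i := ((integrableF t hx 1).neg).const_mul x
  have h0i := (integrableF t hx 0).const_mul (x ^ 2 - t ^ 2)
  simp only [pow_one, Pi.neg_apply] at h1i
  simp only [pow_zero, one_mul] at h0i
  have key : x ^ 2 * Kit2 t x + x * Kit1 t x - (x ^ 2 - t ^ 2) * Kit t x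
      = ∫ u in Ioi (0:ℝ), -G u := by
    have hptw : (fun u => -G u) = fun u =>
        x ^ 2 * (Real.cosh u ^ 2 * Real.exp (-x * Real.cosh u) * Real.cos (t * u)) +
          x * -(Real.cosh u * Real.exp (-x * Real.cosh u) * Real.cos (t * u)) -
          (x ^ 2 - t ^ 2) * (Real.exp (-x * Real.cosh u) * Real.cos (t * u)) := by
      funext u
      simp only [hGdef]
      rw [Real.sinh_sq]
      ring
    rw [Kit_def, Kit1_def, Kit2_def, ← integral_const_mul, ← integral_const_mul,
      ← integral_const_mul, hptw, ← integral_add h2i h1i]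
    have h21 : Integrable (fun a : ℝ =>
        x ^ 2 * (Real.cosh a ^ 2 * Real.exp (-x * Real.cosh a) * Real.cos (t * a)) +
          x * -(Real.cosh a * Real.exp (-x * Real.cosh a) * Real.cos (t * a)))
        (volume.restrict (Ioi (0:ℝ))) := h2i.add h1i
    rw [← integral_sub h21 h0i]
  rw [key, integral_neg, hIG, neg_zero]

/-- h(τ) = cosh(αt)·2√τ·K_{it}(2πτ) satisfies h'' + (−4π² + (1/4+t²)/τ²)h = 0 on (0,∞). -/
theorem stmt16 (t α : ℝ) (hα0 : 0 ≤ α) (hα : α < π / 2)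
    (h : ℝ → ℝ) (hdef : h = fun τ => Real.cosh (α * t) * 2 * Real.sqrt τ * Kit t (2 * π * τ)) :
    ∀ τ : ℝ, 0 < τ →
      DifferentiableAt ℝ h τ ∧ DifferentiableAt ℝ (deriv h) τ ∧
      deriv (deriv h) τ + (-4 * π ^ 2 + (1 / 4 + t ^ 2) / τ ^ 2) * h τ = 0 := by
  have hπ : (0:ℝ) < π := Real.pi_pos
  set c : ℝ := Real.cosh (α * t) * 2 with hc
  set h1 : ℝ → ℝ := fun σ =>
    c * ((2 * Real.sqrt σ)⁻¹ * Kit t (2 * π * σ) + Real.sqrt σ * (2 * π * Kit1 t (2 * π * σ)))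
    with hh1
  set h2 : ℝ → ℝ := fun σ =>
    c * (-(1 / (4 * σ * Real.sqrt σ)) * Kit t (2 * π * σ)
      + (2 * π / Real.sqrt σ) * Kit1 t (2 * π * σ)
      + 4 * π ^ 2 * Real.sqrt σ * Kit2 t (2 * π * σ)) with hh2
  have hlin : ∀ σ : ℝ, HasDerivAt (fun σ : ℝ => 2 * π * σ) (2 * π) σ := fun σ => by
    simpa using (hasDerivAt_id σ).const_mul (2 * π)
  have hA : ∀ σ : ℝ, 0 < σ → HasDerivAt h (h1 σ) σ := by
    intro σ hσ
    have hx : (0:ℝ) < 2 * π * σ := by positivity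
    have hsne : Real.sqrt σ ≠ 0 := by positivity
    have hs := Real.hasDerivAt_sqrt (ne_of_gt hσ)
    have hK : HasDerivAt (fun σ : ℝ => Kit t (2 * π * σ)) (Kit1 t (2 * π * σ) * (2 * π)) σ :=
      (hasDerivAt_Kit t hx).comp σ (hlin σ)
    have := ((hs.const_mul c).mul hK)
    rw [hdef]
    convert this using 1
    · rfl
    · rfl
    · rfl
    simp only [hh1]
    field_simp
  have hB : ∀ σ : ℝ, 0 < σ → HasDerivAt h1 (h2 σ) σ := by
    intro σ hσ
    have hx : (0:ℝ) < 2 * π * σ := by positivity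
    have hsne : Real.sqrt σ ≠ 0 := by positivity
    have hsq : Real.sqrt σ ^ 2 = σ := Real.sq_sqrt hσ.le
    have hs := Real.hasDerivAt_sqrt (ne_of_gt hσ)
    have hK : HasDerivAt (fun σ : ℝ => Kit t (2 * π * σ)) (Kit1 t (2 * π * σ) * (2 * π)) σ :=
      (hasDerivAt_Kit t hx).comp σ (hlin σ)
    have hK1 : HasDerivAt (fun σ : ℝ => Kit1 t (2 * π * σ)) (Kit2 t (2 * π * σ) * (2 * π)) σ :=
      (hasDerivAt_Kit1 t hx).comp σ (hlin σ)
    have hinv : HasDerivAt (fun σ : ℝ => (2 * Real.sqrt σ)⁻¹)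
        (-(2 * (1 / (2 * Real.sqrt σ))) / (2 * Real.sqrt σ) ^ 2) σ :=
      (hs.const_mul 2).inv (by positivity)
    have hmain := ((hinv.mul hK).add (hs.mul (hK1.const_mul (2 * π)))).const_mul c
    convert hmain using 1
    · rfl
    · rfl
    · rfl
    simp only [hh2]
    field_simp
    ring_nf
    rw [hsq]
    ring_nf
  intro τ hτ
  have hev : deriv h =ᶠ[nhds τ] h1 :=
    Filter.eventually_of_mem (Ioi_mem_nhds hτ) (fun σ hσ => (hA σ hσ).deriv)
  refine ⟨(hA τ hτ).differentiableAt, ((hB τ hτ).differentiableAt).congr_of_eventuallyEq hev, ?_⟩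
  have hd2 : deriv (deriv h) τ = h2 τ := by
    rw [Filter.EventuallyEq.deriv_eq hev]
    exact (hB τ hτ).deriv
  have hx : (0:ℝ) < 2 * π * τ := by positivity
  have hBessel := bessel_ode t hx
  have hsne : Real.sqrt τ ≠ 0 := by positivity
  have hsq : Real.sqrt τ ^ 2 = τ := Real.sq_sqrt hτ.le
  have key : ∀ s Kv K1v K2v : ℝ, s ≠ 0 →
      (2*π*s^2)^2*K2v + (2*π*s^2)*K1v - ((2*π*s^2)^2 - t^2)*Kv = 0 →
      Real.cosh (α*t) * 2 * (-(1/(4*s^2*s))*Kv + (2*π/s)*K1v + 4*π^2*s*K2v)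
        + (-4*π^2 + (1/4+t^2)/(s^2)^2) * (Real.cosh (α*t) * 2 * s * Kv) = 0 := by
    intro s Kv K1v K2v hs hB
    field_simp
    linear_combination (8 * Real.cosh (α*t)) * hB
  have hBs : (2*π*Real.sqrt τ^2)^2 * Kit2 t (2*π*τ) + (2*π*Real.sqrt τ^2) * Kit1 t (2*π*τ)
      - ((2*π*Real.sqrt τ^2)^2 - t^2) * Kit t (2*π*τ) = 0 := by
    rw [hsq]; exact hBessel
  have := key (Real.sqrt τ) (Kit t (2*π*τ)) (Kit1 t (2*π*τ)) (Kit2 t (2*π*τ)) hsne hBs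
  rw [hsq] at this
  rw [hd2, hdef]
  simp only [hh2, hc]
  linear_combination this
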